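/- arXiv:2103.09324 — 5 statements merged into one kernel-verified Lean document; each statement's English description precedes it below -/
import Mathlib

section
/- Let P1 = N(m1, σ1²) and P2 = N(m2, σ2²) be normal distributions on ℝ with (m1, σ1) ≠ (m2, σ2). Then either P1 strongly dominates P2 in the right tail, or P2 strongly dominates P1 in the right tail. -/
open Real MeasureTheory Filter Topology ProbabilityTheory
open scoped NNReal ENNReal
open Set intervalIntegral

/-- `P1` strongly dominates `P2` in the right tail: the relative proportion of `P1`
in the right tail approaches 100% as the cutoff goes to infinity. -/
def StronglyDominatesRight (P1 P2 : Measure ℝ) : Prop :=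
  Tendsto (fun c => (P1 (Set.Ioi c)).toReal /
    ((P1 (Set.Ioi c)).toReal + (P2 (Set.Ioi c)).toReal)) atTop (𝓝 1)

noncomputable def tailT (m : ℝ) (v : ℝ≥0) (c : ℝ) : ℝ :=
  ∫ x in Set.Ioi c, gaussianPDFReal m v x

lemma gpdf_continuous (m : ℝ) (v : ℝ≥0) : Continuous (gaussianPDFReal m v) := by
  rw [gaussianPDFReal_def]
  fun_prop

lemma tailT_eq (m : ℝ) {v : ℝ≥0} (hv : v ≠ 0) (c : ℝ) :
    ((gaussianReal m v) (Set.Ioi c)).toReal = tailT m v c := by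
  rw [gaussianReal_apply_eq_integral m hv, ENNReal.toReal_ofReal]
  · rfl
  · exact setIntegral_nonneg measurableSet_Ioi fun x _ => gaussianPDFReal_nonneg m v x

lemma tailT_hasDeriv (m : ℝ) (v : ℝ≥0) (c : ℝ) :
    HasDerivAt (tailT m v) (-(gaussianPDFReal m v c)) c := by
  have hint := integrable_gaussianPDFReal m v
  have heq : tailT m v = fun c => (∫ x, gaussianPDFReal m v x) -
      ((∫ x in Set.Iic (0:ℝ), gaussianPDFReal m v x) +
        ∫ x in (0:ℝ)..c, gaussianPDFReal m v x) := by
    funext c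
    have h1 : (∫ x in Set.Iic c, gaussianPDFReal m v x) -
        ∫ x in Set.Iic (0:ℝ), gaussianPDFReal m v x
        = ∫ x in (0:ℝ)..c, gaussianPDFReal m v x :=
      integral_Iic_sub_Iic hint.integrableOn hint.integrableOn
    have h2 : (∫ x in Set.Iic c, gaussianPDFReal m v x) + ∫ x in (Set.Iic c)ᶜ,
        gaussianPDFReal m v x = ∫ x, gaussianPDFReal m v x :=
      integral_add_compl measurableSet_Iic hint
    rw [Set.compl_Iic] at h2
    simp only [tailT]
    linarith
  rw [heq]
  have hd : HasDerivAt (fun u => ∫ x in (0:ℝ)..u, gaussianPDFReal m v x)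
      (gaussianPDFReal m v c) c :=
    intervalIntegral.integral_hasDerivAt_right hint.intervalIntegrable
      ((gpdf_continuous m v).stronglyMeasurableAtFilter _ _)
      (gpdf_continuous m v).continuousAt
  simpa using (hd.const_add (∫ x in Set.Iic (0:ℝ), gaussianPDFReal m v x)).const_sub
    (∫ x, gaussianPDFReal m v x)

lemma tailT_pos (m : ℝ) {v : ℝ≥0} (hv : v ≠ 0) (c : ℝ) : 0 < tailT m v c := by
  rw [← tailT_eq m hv c]
  refine ENNReal.toReal_pos ?_ (measure_ne_top _ _)
  intro h0
  have := (gaussianReal_absolutelyContinuous' m hv) h0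
  simp [Real.volume_Ioi] at this

lemma tailT_tendsto_zero (m : ℝ) {v : ℝ≥0} (hv : v ≠ 0) :
    Tendsto (tailT m v) atTop (𝓝 0) := by
  have h1 : Tendsto (fun c => (gaussianReal m v) (Set.Iic c)) atTop (𝓝 1) := by
    simpa using tendsto_measure_Iic_atTop (gaussianReal m v)
  have h2 : Tendsto (fun c => (1 : ℝ≥0∞) - (gaussianReal m v) (Set.Iic c)) atTop (𝓝 0) := by
    simpa using ENNReal.Tendsto.sub tendsto_const_nhds h1 (Or.inl ENNReal.one_ne_top)
  have h3 : ∀ c : ℝ, (1 : ℝ≥0∞) - (gaussianReal m v) (Set.Iic c)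
      = (gaussianReal m v) (Set.Ioi c) := by
    intro c
    rw [← Set.compl_Iic, measure_compl measurableSet_Iic (measure_ne_top _ _)]
    simp
  have h4 : Tendsto (fun c => ((gaussianReal m v) (Set.Ioi c)).toReal) atTop (𝓝 0) := by
    have := (ENNReal.tendsto_toReal ENNReal.zero_ne_top).comp (h2.congr h3)
    simpa [Function.comp_def] using this
  exact h4.congr fun c => tailT_eq m hv c

lemma dom (m1 m2 : ℝ) (v1 v2 : ℝ≥0) (hv1 : v1 ≠ 0) (hv2 : v2 ≠ 0)
    (h : Tendsto (fun c => gaussianPDFReal m2 v2 c / gaussianPDFReal m1 v1 c)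
      atTop (𝓝 0)) :
    Tendsto (fun c => ((gaussianReal m1 v1) (Set.Ioi c)).toReal /
      (((gaussianReal m1 v1) (Set.Ioi c)).toReal + ((gaussianReal m2 v2) (Set.Ioi c)).toReal))
      atTop (𝓝 1) := by
  have hr : Tendsto (fun c => tailT m2 v2 c / tailT m1 v1 c) atTop (𝓝 0) := by
    refine HasDerivAt.lhopital_zero_atTop
      (f' := fun c => -(gaussianPDFReal m2 v2 c)) (g' := fun c => -(gaussianPDFReal m1 v1 c))
      (Eventually.of_forall (tailT_hasDeriv m2 v2))
      (Eventually.of_forall (tailT_hasDeriv m1 v1))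
      (Eventually.of_forall fun c => ?_)
      (tailT_tendsto_zero m2 hv2) (tailT_tendsto_zero m1 hv1) ?_
    · exact neg_ne_zero.mpr (gaussianPDFReal_pos m1 v1 c hv1).ne'
    · simpa [neg_div_neg_eq] using h
  have key : Tendsto (fun c => 1 / (1 + tailT m2 v2 c / tailT m1 v1 c)) atTop (𝓝 1) := by
    have h2 : Tendsto (fun c => 1 + tailT m2 v2 c / tailT m1 v1 c) atTop (𝓝 (1 + 0)) :=
      tendsto_const_nhds.add hr
    have h3 := (tendsto_const_nhds (x := (1:ℝ))).div h2 (by norm_num : (1:ℝ) + 0 ≠ 0)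
    simpa [Pi.div_def] using h3
  refine key.congr fun c => ?_
  rw [tailT_eq m1 hv1 c, tailT_eq m2 hv2 c]
  have hp1 := tailT_pos m1 hv1 c
  have hp2 := tailT_pos m2 hv2 c
  rw [show (1:ℝ) + tailT m2 v2 c / tailT m1 v1 c
      = (tailT m1 v1 c + tailT m2 v2 c) / tailT m1 v1 c by field_simp, one_div_div]

lemma pdf_ratio (m1 m2 σ1 σ2 : ℝ) (hσ1 : 0 < σ1) (hσ2 : 0 < σ2)
    (hcase : σ2 < σ1 ∨ (σ1 = σ2 ∧ m2 < m1)) :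
    Tendsto (fun c => gaussianPDFReal m2 (Real.toNNReal (σ2^2)) c /
      gaussianPDFReal m1 (Real.toNNReal (σ1^2)) c) atTop (𝓝 0) := by
  have hc1 : ((Real.toNNReal (σ1^2) : ℝ≥0) : ℝ) = σ1^2 := Real.coe_toNNReal _ (sq_nonneg σ1)
  have hc2 : ((Real.toNNReal (σ2^2) : ℝ≥0) : ℝ) = σ2^2 := Real.coe_toNNReal _ (sq_nonneg σ2)
  have hv1ne : (Real.toNNReal (σ1^2) : ℝ≥0) ≠ 0 := by
    simp only [ne_eq, Real.toNNReal_eq_zero, not_le]; positivity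
  set E : ℝ → ℝ := fun c => (c - m1)^2 / (2 * σ1^2) - (c - m2)^2 / (2 * σ2^2) with hEdef
  set K : ℝ := Real.sqrt (2 * π * σ1^2) / Real.sqrt (2 * π * σ2^2) with hKdef
  have hs1 : (0:ℝ) < Real.sqrt (2 * π * σ1^2) := by
    apply Real.sqrt_pos.mpr; positivity
  have hs2 : (0:ℝ) < Real.sqrt (2 * π * σ2^2) := by
    apply Real.sqrt_pos.mpr; positivity
  have key : ∀ c, gaussianPDFReal m2 (Real.toNNReal (σ2^2)) c /
      gaussianPDFReal m1 (Real.toNNReal (σ1^2)) c = K * Real.exp (E c) := by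
    intro c
    have e1 : Real.exp (E c) * Real.exp (-(c - m1)^2 / (2 * σ1^2))
        = Real.exp (-(c - m2)^2 / (2 * σ2^2)) := by
      rw [← Real.exp_add]; congr 1
      simp only [hEdef]; field_simp; ring
    simp only [gaussianPDFReal, hc1, hc2]
    set x := Real.sqrt (2 * π * σ1^2) with hx
    set y := Real.sqrt (2 * π * σ2^2) with hy
    rw [div_eq_iff (mul_pos (inv_pos.mpr hs1) (Real.exp_pos _)).ne', hKdef, ← e1]
    field_simp
  have hEbot : Tendsto E atTop atBot := by
    rcases hcase with h | ⟨heq, hm⟩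
    · have ha : (1 / (2*σ1^2) - 1/(2*σ2^2)) < 0 := by
        rw [sub_neg]
        apply div_lt_div_of_pos_left one_pos (by positivity)
        nlinarith
      set a : ℝ := 1/(2*σ1^2) - 1/(2*σ2^2) with hadef
      set b : ℝ := m2/σ2^2 - m1/σ1^2 with hbdef
      have hEexp : E = fun c => c * (a * c + b)
          + (m1^2/(2*σ1^2) - m2^2/(2*σ2^2)) := by
        funext c
        simp only [hEdef, hadef, hbdef]; field_simp
        ring
      rw [hEexp]
      apply tendsto_atBot_add_const_right
      have hlin : Tendsto (fun c : ℝ => a * c + b) atTop atBot :=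
        tendsto_atBot_add_const_right _ b ((tendsto_const_mul_atBot_of_neg ha).mpr tendsto_id)
      exact tendsto_id.atTop_mul_atBot₀ hlin
    · subst heq
      have hEexp : E = fun c => ((m2 - m1)/σ1^2) * c + (m1^2 - m2^2)/(2*σ1^2) := by
        funext c; simp only [hEdef]; field_simp; ring
      rw [hEexp]
      apply tendsto_atBot_add_const_right
      refine (tendsto_const_mul_atBot_of_neg ?_).mpr tendsto_id
      apply div_neg_of_neg_of_pos (by linarith) (by positivity)
  have hfin : Tendsto (fun c => K * Real.exp (E c)) atTop (𝓝 0) := by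
    have := (Real.tendsto_exp_atBot.comp hEbot).const_mul K
    simpa using this
  exact hfin.congr fun c => (key c).symm

theorem normal_dichotomy_strong_dominance
    (m1 m2 σ1 σ2 : ℝ) (hσ1 : 0 < σ1) (hσ2 : 0 < σ2)
    (hne : (m1, σ1) ≠ (m2, σ2)) :
    StronglyDominatesRight (gaussianReal m1 (Real.toNNReal (σ1 ^ 2)))
        (gaussianReal m2 (Real.toNNReal (σ2 ^ 2)))
    ∨ StronglyDominatesRight (gaussianReal m2 (Real.toNNReal (σ2 ^ 2)))
        (gaussianReal m1 (Real.toNNReal (σ1 ^ 2))) := by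
  have hv1 : (Real.toNNReal (σ1 ^ 2)) ≠ 0 := by
    simp only [ne_eq, Real.toNNReal_eq_zero, not_le]; positivity
  have hv2 : (Real.toNNReal (σ2 ^ 2)) ≠ 0 := by
    simp only [ne_eq, Real.toNNReal_eq_zero, not_le]; positivity
  rcases lt_trichotomy σ1 σ2 with h | h | h
  · right
    exact dom m2 m1 _ _ hv2 hv1 (pdf_ratio m2 m1 σ2 σ1 hσ2 hσ1 (Or.inl h))
  · rcases lt_trichotomy m1 m2 with hm | hm | hm
    · right
      exact dom m2 m1 _ _ hv2 hv1 (pdf_ratio m2 m1 σ2 σ1 hσ2 hσ1 (Or.inr ⟨h.symm, hm⟩))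
    · exact absurd (by rw [hm, h]) hne
    · left
      exact dom m1 m2 _ _ hv1 hv2 (pdf_ratio m1 m2 σ1 σ2 hσ1 hσ2 (Or.inr ⟨h, hm⟩))
  · left
    exact dom m1 m2 _ _ hv1 hv2 (pdf_ratio m1 m2 σ1 σ2 hσ1 hσ2 (Or.inl h))
end

section
/- Let n ≥ 1 and let P1, …, Pn be pairwise different normal distributions on ℝ, with Pi = N(mi, σi²) and (mi, σi) ≠ (mj, σj) for i ≠ j. Then there exists one and only one index i* ∈ {1, …, n} such that P_{i*} strongly dominates P_i in the right tail for every i ≠ i*. -/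
open Real MeasureTheory Filter Topology ProbabilityTheory

set_option maxHeartbeats 1000000

noncomputable def gpdf (m σ x : ℝ) : ℝ :=
  (Real.sqrt (2 * π * σ ^ 2))⁻¹ * Real.exp (-(x - m) ^ 2 / (2 * σ ^ 2))

lemma gpdf_eq {σ : ℝ} (hσ : 0 < σ) (m x : ℝ) :
    gaussianPDFReal m (Real.toNNReal (σ ^ 2)) x = gpdf m σ x := by
  simp [gaussianPDFReal, gpdf, Real.coe_toNNReal _ (sq_nonneg σ)]

lemma gpdf_pos {σ : ℝ} (hσ : 0 < σ) (m x : ℝ) : 0 < gpdf m σ x := by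
  have h2 : 0 < 2 * π * σ ^ 2 := by positivity
  unfold gpdf
  positivity

lemma gpdf_hasDerivAt {σ : ℝ} (hσ : 0 < σ) (m x : ℝ) :
    HasDerivAt (fun x => -gpdf m σ x) ((x - m) / σ ^ 2 * gpdf m σ x) x := by
  have hσ2 : (σ:ℝ) ^ 2 ≠ 0 := by positivity
  have h1 : HasDerivAt (fun x : ℝ => -(x - m) ^ 2 / (2 * σ ^ 2))
      (-(2 * (x - m)) / (2 * σ ^ 2)) x := by
    have := (((hasDerivAt_id x).sub_const m).pow 2).neg.div_const (2 * σ ^ 2)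
    simpa [mul_comm] using this
  have h2 := (h1.exp.const_mul ((Real.sqrt (2 * π * σ ^ 2))⁻¹)).neg
  refine h2.congr_deriv ?_
  unfold gpdf
  field_simp

lemma gpdf_tendsto {σ : ℝ} (hσ : 0 < σ) (m : ℝ) :
    Tendsto (fun x => gpdf m σ x) atTop (𝓝 0) := by
  have hsq : Tendsto (fun x : ℝ => (x - m) ^ 2) atTop atTop := by
    have h := tendsto_atTop_add_const_right atTop (-m) tendsto_id
    have := h.atTop_mul_atTop₀ h
    simpa [sub_eq_add_neg, sq] using this
  have hexp : Tendsto (fun x : ℝ => -(x - m) ^ 2 / (2 * σ ^ 2)) atTop atBot := by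
    have h := (hsq.atTop_div_const (by positivity : (0:ℝ) < 2 * σ ^ 2))
    have h2 := tendsto_neg_atTop_atBot.comp h
    simpa only [Function.comp_def, neg_div] using h2
  have := (Real.tendsto_exp_atBot.comp hexp).const_mul ((Real.sqrt (2 * π * σ ^ 2))⁻¹)
  simpa [gpdf, Function.comp] using this

noncomputable def gTail (m σ c : ℝ) : ℝ :=
  ((gaussianReal m (Real.toNNReal (σ ^ 2))) (Set.Ioi c)).toReal

lemma toNNReal_sq_ne_zero {σ : ℝ} (hσ : 0 < σ) : Real.toNNReal (σ ^ 2) ≠ 0 := by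
  simp only [ne_eq, Real.toNNReal_eq_zero, not_le]
  positivity

lemma gpdf_integrable {σ : ℝ} (hσ : 0 < σ) (m : ℝ) : Integrable (gpdf m σ) :=
  (integrable_gaussianPDFReal m _).congr (ae_of_all _ fun x => gpdf_eq hσ m x)

lemma gTail_eq {σ : ℝ} (hσ : 0 < σ) (m c : ℝ) :
    gTail m σ c = ∫ x in Set.Ioi c, gpdf m σ x := by
  rw [gTail, gaussianReal_apply_eq_integral _ (toNNReal_sq_ne_zero hσ),
    ENNReal.toReal_ofReal (integral_nonneg fun x => gaussianPDFReal_nonneg _ _ _)]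
  simp_rw [gpdf_eq hσ]

lemma gTail_nonneg (m σ c : ℝ) : 0 ≤ gTail m σ c := ENNReal.toReal_nonneg

lemma gTail_le {σ : ℝ} (hσ : 0 < σ) {m c : ℝ} (hc : m + σ ^ 2 ≤ c) :
    gTail m σ c ≤ gpdf m σ c := by
  have hder : ∀ x ∈ Set.Ici c, HasDerivAt (fun x => -gpdf m σ x)
      ((x - m) / σ ^ 2 * gpdf m σ x) x := fun x _ => gpdf_hasDerivAt hσ m x
  have hpos : ∀ x ∈ Set.Ioi c, 0 ≤ (x - m) / σ ^ 2 * gpdf m σ x := by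
    intro x hx
    have hx' : c < x := hx
    have hxm : (0:ℝ) ≤ x - m := by nlinarith [sq_nonneg σ]
    exact mul_nonneg (div_nonneg hxm (sq_nonneg σ)) (gpdf_pos hσ m x).le
  have hlim : Tendsto (fun x => -gpdf m σ x) atTop (𝓝 (0:ℝ)) := by
    simpa using (gpdf_tendsto hσ m).neg
  have hint := integrableOn_Ioi_deriv_of_nonneg' hder hpos hlim
  have heval := integral_Ioi_of_hasDerivAt_of_nonneg' hder hpos hlim
  rw [gTail_eq hσ]
  calc ∫ x in Set.Ioi c, gpdf m σ x
      ≤ ∫ x in Set.Ioi c, (x - m) / σ ^ 2 * gpdf m σ x := by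
        apply setIntegral_mono_on (gpdf_integrable hσ m).integrableOn hint measurableSet_Ioi
        intro x hx
        have hx' : c < x := hx
        have h1 : (1:ℝ) ≤ (x - m) / σ ^ 2 := by
          rw [le_div_iff₀ (by positivity)]
          nlinarith
        exact le_mul_of_one_le_left (gpdf_pos hσ m x).le h1
    _ = gpdf m σ c := by rw [heval]; ring

lemma le_gTail {σ : ℝ} (hσ : 0 < σ) {ε : ℝ} (hε : 0 < ε) {m c : ℝ} (hc : m ≤ c) :
    ε * gpdf m σ (c + ε) ≤ gTail m σ c := by
  rw [gTail_eq hσ]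
  have h1 : ∫ x in Set.Ioc c (c + ε), gpdf m σ x ≤ ∫ x in Set.Ioi c, gpdf m σ x :=
    setIntegral_mono_set (gpdf_integrable hσ m).integrableOn
      (ae_of_all _ fun x => (gpdf_pos hσ m x).le)
      (HasSubset.Subset.eventuallyLE Set.Ioc_subset_Ioi_self)
  refine le_trans ?_ h1
  have h2 : ∀ x ∈ Set.Ioc c (c + ε), gpdf m σ (c + ε) ≤ gpdf m σ x := by
    intro x hx
    have key : -(c + ε - m) ^ 2 / (2 * σ ^ 2) ≤ -(x - m) ^ 2 / (2 * σ ^ 2) := by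
      apply (div_le_div_iff_of_pos_right (by positivity)).2
      nlinarith [hx.1, hx.2]
    exact mul_le_mul_of_nonneg_left (Real.exp_le_exp.2 key)
      (inv_nonneg.2 (Real.sqrt_nonneg _))
  calc ε * gpdf m σ (c + ε) = ∫ _ in Set.Ioc c (c + ε), gpdf m σ (c + ε) := by
        rw [setIntegral_const, measureReal_def, Real.volume_Ioc,
          ENNReal.toReal_ofReal (by linarith : (0:ℝ) ≤ c + ε - c), smul_eq_mul]
        ring_nf
    _ ≤ ∫ x in Set.Ioc c (c + ε), gpdf m σ x := by
        apply setIntegral_mono_on _ (gpdf_integrable hσ m).integrableOn measurableSet_Ioc h2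
        exact integrableOn_const measure_Ioc_lt_top.ne

lemma exponent_tendsto {m1 σ1 m2 σ2 ε : ℝ} (h1 : 0 < σ1) (h2 : 0 < σ2) (hε : 0 < ε)
    (hlt : σ2 < σ1 ∨ (σ2 = σ1 ∧ ε < m1 - m2)) :
    Tendsto (fun c => -(c - m2) ^ 2 / (2 * σ2 ^ 2) + (c + ε - m1) ^ 2 / (2 * σ1 ^ 2))
      atTop atBot := by
  have hid : ∀ c : ℝ, -(c - m2) ^ 2 / (2 * σ2 ^ 2) + (c + ε - m1) ^ 2 / (2 * σ1 ^ 2)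
      = ((c + ε - m1) / σ1 - (c - m2) / σ2) * ((c + ε - m1) / σ1 + (c - m2) / σ2) / 2 := by
    intro c
    field_simp
    ring
  have ha : Tendsto (fun c : ℝ => (c + ε - m1) / σ1) atTop atTop := by
    refine (Tendsto.atTop_div_const h1 ?_)
    exact (tendsto_atTop_add_const_right atTop (ε - m1) tendsto_id).congr fun c => by
      simp only [id_eq]; ring
  have hb : Tendsto (fun c : ℝ => (c - m2) / σ2) atTop atTop := by
    refine (Tendsto.atTop_div_const h2 ?_)
    exact (tendsto_atTop_add_const_right atTop (-m2) tendsto_id).congr fun c => by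
      simp only [id_eq]; ring
  have hsum : Tendsto (fun c : ℝ => (c + ε - m1) / σ1 + (c - m2) / σ2) atTop atTop :=
    ha.atTop_add_atTop hb
  have hdiffb : Tendsto
      (fun c : ℝ => ((c + ε - m1) / σ1 - (c - m2) / σ2) * ((c + ε - m1) / σ1 + (c - m2) / σ2))
      atTop atBot := by
    rcases hlt with hσ | ⟨hσeq, hm⟩
    · have hcoef : σ1⁻¹ - σ2⁻¹ < 0 := by
        rw [sub_neg]
        exact inv_strictAnti₀ h2 hσ
      have hd : Tendsto (fun c : ℝ => (c + ε - m1) / σ1 - (c - m2) / σ2) atTop atBot := by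
        have h := (tendsto_id (α := ℝ)).atTop_mul_const_of_neg hcoef
        have h' := tendsto_atBot_add_const_right atTop ((ε - m1) / σ1 + m2 / σ2) h
        refine h'.congr fun c => ?_
        simp only [id_eq]
        field_simp
        ring
      exact hd.atBot_mul_atTop₀ hsum
    · subst hσeq
      have hconst : ∀ c : ℝ, (c + ε - m1) / σ2 - (c - m2) / σ2 = (ε - m1 + m2) / σ2 := by
        intro c; field_simp; ring
      have hneg : (ε - m1 + m2) / σ2 < 0 :=
        div_neg_of_neg_of_pos (by linarith) h2
      have := Tendsto.const_mul_atTop_of_neg hneg hsum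
      refine this.congr fun c => ?_
      rw [hconst c]
  have h3 := hdiffb.atBot_div_const (by norm_num : (0:ℝ) < 2)
  exact h3.congr fun c => (hid c).symm

lemma ratio_tendsto {m1 σ1 m2 σ2 : ℝ} (h1 : 0 < σ1) (h2 : 0 < σ2)
    (hlt : σ2 < σ1 ∨ (σ2 = σ1 ∧ m2 < m1)) :
    Tendsto (fun c => gTail m2 σ2 c / gTail m1 σ1 c) atTop (𝓝 0) := by
  obtain ⟨ε, hε, hlt'⟩ : ∃ ε : ℝ, 0 < ε ∧ (σ2 < σ1 ∨ (σ2 = σ1 ∧ ε < m1 - m2)) := by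
    rcases hlt with h | ⟨he, hm⟩
    · exact ⟨1, one_pos, Or.inl h⟩
    · exact ⟨(m1 - m2) / 2, by linarith, Or.inr ⟨he, by linarith⟩⟩
  -- the bounding function
  set B : ℝ → ℝ := fun c => gpdf m2 σ2 c / (ε * gpdf m1 σ1 (c + ε)) with hB
  have hBeq : ∀ c, B c = Real.sqrt (2 * π * σ1 ^ 2) / (ε * Real.sqrt (2 * π * σ2 ^ 2)) *
      Real.exp (-(c - m2) ^ 2 / (2 * σ2 ^ 2) + (c + ε - m1) ^ 2 / (2 * σ1 ^ 2)) := by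
    intro c
    have hs1 : (0:ℝ) < Real.sqrt (2 * π * σ1 ^ 2) := Real.sqrt_pos.2 (by positivity)
    have hs2 : (0:ℝ) < Real.sqrt (2 * π * σ2 ^ 2) := Real.sqrt_pos.2 (by positivity)
    have hexp : Real.exp (-(c - m2) ^ 2 / (2 * σ2 ^ 2) + (c + ε - m1) ^ 2 / (2 * σ1 ^ 2))
        = Real.exp (-(c - m2) ^ 2 / (2 * σ2 ^ 2)) / Real.exp (-(c + ε - m1) ^ 2 / (2 * σ1 ^ 2)) := by
      rw [← Real.exp_sub]; ring_nf
    rw [hB]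
    simp only [gpdf]
    rw [hexp]
    field_simp
  have hBlim : Tendsto B atTop (𝓝 0) := by
    have hexp := Real.tendsto_exp_atBot.comp (exponent_tendsto h1 h2 hε hlt')
    have h4 := hexp.const_mul (Real.sqrt (2 * π * σ1 ^ 2) / (ε * Real.sqrt (2 * π * σ2 ^ 2)))
    rw [mul_zero] at h4
    exact h4.congr fun c => (hBeq c).symm
  apply squeeze_zero' (Eventually.of_forall fun c =>
    div_nonneg (gTail_nonneg m2 σ2 c) (gTail_nonneg m1 σ1 c)) _ hBlim
  filter_upwards [eventually_ge_atTop (m2 + σ2 ^ 2), eventually_ge_atTop m1] with c hc1 hc2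
  have hup : gTail m2 σ2 c ≤ gpdf m2 σ2 c := gTail_le h2 hc1
  have hlo : ε * gpdf m1 σ1 (c + ε) ≤ gTail m1 σ1 c := le_gTail h1 hε hc2
  exact div_le_div₀ (gpdf_pos h2 m2 c).le hup (mul_pos hε (gpdf_pos h1 m1 (c + ε))) hlo

lemma gTail_pos_eventually {σ : ℝ} (hσ : 0 < σ) (m : ℝ) :
    ∀ᶠ c in atTop, 0 < gTail m σ c := by
  filter_upwards [eventually_ge_atTop m] with c hc
  calc (0:ℝ) < 1 * gpdf m σ (c + 1) := by
        rw [one_mul]; exact gpdf_pos hσ m _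
    _ ≤ gTail m σ c := le_gTail hσ one_pos hc

lemma sdr_of {m1 σ1 m2 σ2 : ℝ} (h1 : 0 < σ1) (h2 : 0 < σ2)
    (hlt : σ2 < σ1 ∨ (σ2 = σ1 ∧ m2 < m1)) :
    StronglyDominatesRight (gaussianReal m1 (Real.toNNReal (σ1 ^ 2)))
      (gaussianReal m2 (Real.toNNReal (σ2 ^ 2))) := by
  show Tendsto (fun c => gTail m1 σ1 c / (gTail m1 σ1 c + gTail m2 σ2 c)) atTop (𝓝 1)
  have hr := ratio_tendsto h1 h2 hlt
  have hlim : Tendsto (fun c => 1 / (1 + gTail m2 σ2 c / gTail m1 σ1 c)) atTop (𝓝 1) := by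
    have h5 : Tendsto (fun c => (1:ℝ) / (1 + gTail m2 σ2 c / gTail m1 σ1 c)) atTop
        (𝓝 (1 / (1 + 0))) :=
      tendsto_const_nhds.div (tendsto_const_nhds.add hr) (by norm_num)
    norm_num at h5
    exact h5.congr fun c => (one_div _).symm
  refine Tendsto.congr' ?_ hlim
  filter_upwards [gTail_pos_eventually h1 m1] with c hc
  rw [one_add_div hc.ne', one_div_div]

lemma sdr_asymm {m1 σ1 m2 σ2 : ℝ} (h1 : 0 < σ1) (h2 : 0 < σ2)
    (ha : StronglyDominatesRight (gaussianReal m1 (Real.toNNReal (σ1 ^ 2)))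
      (gaussianReal m2 (Real.toNNReal (σ2 ^ 2))))
    (hb : StronglyDominatesRight (gaussianReal m2 (Real.toNNReal (σ2 ^ 2)))
      (gaussianReal m1 (Real.toNNReal (σ1 ^ 2)))) : False := by
  have ha' : Tendsto (fun c => gTail m1 σ1 c / (gTail m1 σ1 c + gTail m2 σ2 c)) atTop (𝓝 1) := ha
  have hb' : Tendsto (fun c => gTail m2 σ2 c / (gTail m2 σ2 c + gTail m1 σ1 c)) atTop (𝓝 1) := hb
  have hsum := ha'.add hb'
  have hone : Tendsto (fun c => gTail m1 σ1 c / (gTail m1 σ1 c + gTail m2 σ2 c)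
      + gTail m2 σ2 c / (gTail m2 σ2 c + gTail m1 σ1 c)) atTop (𝓝 1) := by
    refine Tendsto.congr' ?_ tendsto_const_nhds
    filter_upwards [gTail_pos_eventually h1 m1] with c hc
    have hb0 := gTail_nonneg m2 σ2 c
    have hden : gTail m1 σ1 c + gTail m2 σ2 c ≠ 0 := by positivity
    rw [add_comm (gTail m2 σ2 c) (gTail m1 σ1 c), ← add_div, div_self hden]
  have := tendsto_nhds_unique hsum hone
  norm_num at this

theorem exists_unique_strongly_dominant_normal
    (n : ℕ) (hn : 1 ≤ n) (m σ : Fin n → ℝ) (hσ : ∀ i, 0 < σ i)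
    (hdiff : ∀ i j, i ≠ j → (m i, σ i) ≠ (m j, σ j))
    (P : Fin n → Measure ℝ)
    (hP : ∀ i, P i = gaussianReal (m i) (Real.toNNReal ((σ i) ^ 2))) :
    ∃! iStar : Fin n, ∀ i, i ≠ iStar → StronglyDominatesRight (P iStar) (P i) := by
  have hne : (Finset.univ : Finset (Fin n)).Nonempty := ⟨⟨0, hn⟩, Finset.mem_univ _⟩
  obtain ⟨iStar, -, hmax⟩ := Finset.exists_max_image Finset.univ
    (fun i => toLex (σ i, m i)) hne
  have key : ∀ i, i ≠ iStar → σ i < σ iStar ∨ (σ i = σ iStar ∧ m i < m iStar) := by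
    intro i hi
    have hle := hmax i (Finset.mem_univ i)
    have hne' : toLex (σ i, m i) ≠ toLex (σ iStar, m iStar) := by
      intro h
      apply hdiff i iStar hi
      have h' : (σ i, m i) = (σ iStar, m iStar) := toLex.injective h
      rw [Prod.mk.injEq] at h' ⊢
      exact ⟨h'.2, h'.1⟩
    have hlt := lt_of_le_of_ne hle hne'
    rwa [Prod.Lex.lt_iff] at hlt
  have hdom : ∀ i, i ≠ iStar → StronglyDominatesRight (P iStar) (P i) := by
    intro i hi
    rw [hP iStar, hP i]
    exact sdr_of (hσ iStar) (hσ i) (key i hi)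
  refine ⟨iStar, hdom, ?_⟩
  intro j hj
  by_contra hne2
  have h1 := hdom j hne2
  have h2 := hj iStar fun h => hne2 h.symm
  rw [hP iStar, hP j] at h1 h2
  exact sdr_asymm (hσ iStar) (hσ j) h1 h2
end

section
/- Let n ≥ 1 and let P1, …, Pn be pairwise different normal distributions on ℝ, with Pi = N(mi, σi²) and (mi, σi) ≠ (mj, σj) for i ≠ j. Let i* ∈ {1, …, n} be an index such that σ_{i*} = max{σ1, …, σn} and m_{i*} = max{mj : σj = max{σ1, …, σn}}. Then P_{i*} strongly dominates P_i in the right tail for every i ≠ i*. -/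
open Real MeasureTheory Filter Topology ProbabilityTheory

lemma aux_tail_pos (μ : ℝ) {v : NNReal} (hv : v ≠ 0) (c : ℝ) :
    0 < ∫ x in Set.Ioi c, gaussianPDFReal μ v x := by
  rw [setIntegral_pos_iff_support_of_nonneg_ae
    (ae_of_all _ fun x => gaussianPDFReal_nonneg μ v x)
    ((integrable_gaussianPDFReal μ v).integrableOn)]
  have : Function.support (gaussianPDFReal μ v) = Set.univ := by
    ext x
    simp [Function.mem_support, ne_of_gt (gaussianPDFReal_pos μ v x hv)]
  rw [this, Set.univ_inter]
  simp [Real.volume_Ioi]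

lemma aux_tail_toReal (μ : ℝ) {v : NNReal} (hv : v ≠ 0) (c : ℝ) :
    ((gaussianReal μ v) (Set.Ioi c)).toReal = ∫ x in Set.Ioi c, gaussianPDFReal μ v x := by
  rw [gaussianReal_apply_eq_integral μ hv, ENNReal.toReal_ofReal
    (setIntegral_nonneg measurableSet_Ioi fun x _ => gaussianPDFReal_nonneg μ v x)]

lemma aux_ratio_tendsto_zero (m1 m2 σ1 σ2 : ℝ) (h1 : 0 < σ1) (h2 : 0 < σ2)
    (hcase : σ2 < σ1 ∨ (σ2 = σ1 ∧ m2 < m1)) :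
    Tendsto (fun c => (∫ x in Set.Ioi c, gaussianPDFReal m2 (Real.toNNReal (σ2^2)) x) /
      (∫ x in Set.Ioi c, gaussianPDFReal m1 (Real.toNNReal (σ1^2)) x)) atTop (𝓝 0) := by
  have hv1 : ((Real.toNNReal (σ1^2)) : ℝ) = σ1^2 := Real.coe_toNNReal _ (sq_nonneg _)
  have hv2 : ((Real.toNNReal (σ2^2)) : ℝ) = σ2^2 := Real.coe_toNNReal _ (sq_nonneg _)
  have hv1' : Real.toNNReal (σ1^2) ≠ 0 := by
    simp only [ne_eq, Real.toNNReal_eq_zero, not_le]; positivity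
  have hv2' : Real.toNNReal (σ2^2) ≠ 0 := by
    simp only [ne_eq, Real.toNNReal_eq_zero, not_le]; positivity
  set A : ℝ := 1/(2*σ1^2) - 1/(2*σ2^2) with hA
  set B : ℝ := m2/σ2^2 - m1/σ1^2 with hB
  set D : ℝ := m1^2/(2*σ1^2) - m2^2/(2*σ2^2) with hD
  set q : ℝ → ℝ := fun x => A*x^2 + B*x + D with hqdef
  have hσ1 : (σ1:ℝ)^2 ≠ 0 := by positivity
  have hσ2 : (σ2:ℝ)^2 ≠ 0 := by positivity
  have hq_eq : ∀ x, q x = (x-m1)^2/(2*σ1^2) - (x-m2)^2/(2*σ2^2) := by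
    intro x
    simp only [hqdef, hA, hB, hD]
    field_simp
    ring
  -- case facts
  have hcase' : A < 0 ∨ (A = 0 ∧ B < 0) := by
    rcases hcase with h | ⟨he, hm⟩
    · left
      rw [hA, sub_neg]
      apply one_div_lt_one_div_of_lt
      · positivity
      · have : σ2^2 < σ1^2 := by nlinarith
        linarith
    · right
      constructor
      · rw [hA, he]; ring
      · rw [hB, he, div_sub_div_same]
        apply div_neg_of_neg_of_pos
        · linarith
        · positivity
  -- antitone beyond some X
  obtain ⟨X, hX⟩ : ∃ X : ℝ, ∀ x y, X ≤ x → x ≤ y → q y ≤ q x := by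
    have key : ∀ x y : ℝ, q y - q x = (y - x) * (A*(x+y) + B) := by
      intro x y; simp only [hqdef]; ring
    rcases hcase' with hAneg | ⟨hA0, hBneg⟩
    · refine ⟨-B/(2*A), fun x y hx hxy => ?_⟩
      have hA0 : A ≠ 0 := ne_of_lt hAneg
      have hsum : 2*(-B/(2*A)) ≤ x + y := by linarith
      have h2X : A*(2*(-B/(2*A))) = -B := by field_simp
      have h3 : A*(x+y) ≤ -B :=
        le_of_le_of_eq (mul_le_mul_of_nonpos_left hsum hAneg.le) h2X
      have h5 : (y-x)*(A*(x+y)+B) ≤ 0 :=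
        mul_nonpos_of_nonneg_of_nonpos (by linarith) (by linarith)
      linarith [key x y]
    · refine ⟨0, fun x y hx hxy => ?_⟩
      have := key x y
      rw [hA0] at this
      nlinarith [sub_nonneg.mpr hxy]
  -- q tendsto atBot
  have hq_bot : Tendsto q atTop atBot := by
    have heq : q = fun x => x * (A*x + B) + D := by funext x; simp only [hqdef]; ring
    rw [heq]
    rcases hcase' with hAneg | ⟨hA0, hBneg⟩
    · apply tendsto_atBot_add_const_right
      exact Tendsto.atTop_mul_atBot₀ tendsto_id
        (tendsto_atBot_add_const_right _ _ ((tendsto_const_mul_atBot_of_neg hAneg).mpr tendsto_id))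
    · apply tendsto_atBot_add_const_right
      simp only [hA0, zero_mul, zero_add]
      exact (tendsto_mul_const_atBot_of_neg hBneg).mpr tendsto_id
  -- the ratio function r
  set C : ℝ := (√(2*π*σ2^2))⁻¹ * √(2*π*σ1^2) with hC
  have hCpos : 0 < C := by
    rw [hC]; positivity
  have hr_tendsto : Tendsto (fun c => C * rexp (q c)) atTop (𝓝 0) := by
    have := (Real.tendsto_exp_atBot.comp hq_bot).const_mul C
    simpa using this
  -- pointwise bound
  have hpt : ∀ c, X ≤ c → ∀ x ∈ Set.Ioi c,
      gaussianPDFReal m2 (Real.toNNReal (σ2^2)) x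
        ≤ (C * rexp (q c)) * gaussianPDFReal m1 (Real.toNNReal (σ1^2)) x := by
    intro c hc x hx
    have hx' : c ≤ x := le_of_lt hx
    have hqle : q x ≤ q c := hX c x hc hx'
    simp only [gaussianPDFReal, hv1, hv2]
    have hs1 : √(2*π*σ1^2) ≠ 0 := by positivity
    have hrw : (C * rexp (q c)) * ((√(2 * π * σ1^2))⁻¹ * rexp (-(x - m1)^2 / (2 * σ1^2)))
        = (√(2 * π * σ2^2))⁻¹ * rexp (q c - (x-m1)^2/(2*σ1^2)) := by
      have e1 : rexp (q c - (x-m1)^2/(2*σ1^2))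
          = rexp (q c) * rexp (-(x - m1)^2 / (2 * σ1^2)) := by
        rw [← Real.exp_add]; congr 1; ring
      rw [hC, e1]
      field_simp
    rw [hrw]
    apply mul_le_mul_of_nonneg_left _ (by positivity)
    apply Real.exp_le_exp.mpr
    have := hq_eq x
    have h2 : -(x - m2)^2 / (2 * σ2^2) = q x - (x-m1)^2/(2*σ1^2) := by
      rw [this]; ring
    rw [h2]
    exact sub_le_sub_right hqle _
  -- integral bound
  have hint : ∀ c, X ≤ c →
      (∫ x in Set.Ioi c, gaussianPDFReal m2 (Real.toNNReal (σ2^2)) x)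
        ≤ (C * rexp (q c)) * ∫ x in Set.Ioi c, gaussianPDFReal m1 (Real.toNNReal (σ1^2)) x := by
    intro c hc
    rw [← integral_const_mul]
    apply setIntegral_mono_on
    · exact (integrable_gaussianPDFReal _ _).integrableOn
    · exact ((integrable_gaussianPDFReal _ _).const_mul _).integrableOn
    · exact measurableSet_Ioi
    · exact hpt c hc
  -- squeeze
  have hf_pos : ∀ c, 0 < ∫ x in Set.Ioi c, gaussianPDFReal m1 (Real.toNNReal (σ1^2)) x :=
    fun c => aux_tail_pos m1 hv1' c
  apply tendsto_of_tendsto_of_tendsto_of_le_of_le' tendsto_const_nhds hr_tendsto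
  · filter_upwards with c
    apply div_nonneg _ (le_of_lt (hf_pos c))
    exact setIntegral_nonneg measurableSet_Ioi fun x _ => gaussianPDFReal_nonneg _ _ x
  · filter_upwards [eventually_ge_atTop X] with c hc
    rw [div_le_iff₀ (hf_pos c)]
    exact hint c hc

theorem argmax_sd_then_mean_strongly_dominates
    (n : ℕ) (hn : 1 ≤ n) (m σ : Fin n → ℝ) (hσ : ∀ i, 0 < σ i)
    (hdiff : ∀ i j, i ≠ j → (m i, σ i) ≠ (m j, σ j))
    (P : Fin n → Measure ℝ)
    (hP : ∀ i, P i = gaussianReal (m i) (Real.toNNReal ((σ i) ^ 2)))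
    (iStar : Fin n)
    (hσmax : ∀ i, σ i ≤ σ iStar)
    (hmmax : ∀ i, σ i = σ iStar → m i ≤ m iStar) :
    ∀ i, i ≠ iStar → StronglyDominatesRight (P iStar) (P i) := by
  intro i hi
  have hvstar : Real.toNNReal ((σ iStar)^2) ≠ 0 := by
    simp only [ne_eq, Real.toNNReal_eq_zero, not_le]; exact pow_pos (hσ iStar) 2
  have hvi : Real.toNNReal ((σ i)^2) ≠ 0 := by
    simp only [ne_eq, Real.toNNReal_eq_zero, not_le]; exact pow_pos (hσ i) 2
  have hcase : σ i < σ iStar ∨ (σ i = σ iStar ∧ m i < m iStar) := by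
    rcases lt_or_eq_of_le (hσmax i) with h | h
    · exact Or.inl h
    · right
      refine ⟨h, lt_of_le_of_ne (hmmax i h) ?_⟩
      intro hm
      exact hdiff i iStar hi (by rw [hm, h])
  have hratio := aux_ratio_tendsto_zero (m iStar) (m i) (σ iStar) (σ i)
    (hσ iStar) (hσ i) hcase
  set f : ℝ → ℝ := fun c => ∫ x in Set.Ioi c, gaussianPDFReal (m iStar)
    (Real.toNNReal ((σ iStar)^2)) x with hf
  set g : ℝ → ℝ := fun c => ∫ x in Set.Ioi c, gaussianPDFReal (m i)
    (Real.toNNReal ((σ i)^2)) x with hg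
  have hf_pos : ∀ c, 0 < f c := fun c => aux_tail_pos _ hvstar c
  have hg_nonneg : ∀ c, 0 ≤ g c :=
    fun c => setIntegral_nonneg measurableSet_Ioi fun x _ => gaussianPDFReal_nonneg _ _ x
  have key : Tendsto (fun c => f c / (f c + g c)) atTop (𝓝 1) := by
    have h1 : Tendsto (fun c => 1 + g c / f c) atTop (𝓝 1) := by
      have : Tendsto (fun c => (1:ℝ) + g c / f c) atTop (𝓝 (1 + 0)) :=
        tendsto_const_nhds.add hratio
      simpa using this
    have h2 : Tendsto (fun c => 1 / (1 + g c / f c)) atTop (𝓝 1) := by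
      have := h1.inv₀ (by norm_num)
      simpa [one_div] using this
    apply h2.congr
    intro c
    have hfc := hf_pos c
    have h3 : 1 + g c / f c = (f c + g c) / f c := by field_simp
    rw [h3, one_div_div]
  unfold StronglyDominatesRight
  simp only [hP]
  have heq : ∀ c : ℝ, ((gaussianReal (m iStar) (Real.toNNReal ((σ iStar)^2))) (Set.Ioi c)).toReal
      = f c := fun c => aux_tail_toReal _ hvstar c
  have heq2 : ∀ c : ℝ, ((gaussianReal (m i) (Real.toNNReal ((σ i)^2))) (Set.Ioi c)).toReal
      = g c := fun c => aux_tail_toReal _ hvi c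
  simp only [heq, heq2]
  exact key
end

section
/- Let n ≥ 1 and let P1, …, Pn be pairwise different normal distributions on ℝ, with Pi = N(mi, σi²) and (mi, σi) ≠ (mj, σj) for i ≠ j, and let F̄_i(c) = P_i((c,∞)). Then there exists a unique index i* ∈ {1, …, n} such that for ALL choices of strictly positive weights S1, …, Sn > 0, lim_{c→∞} (S_{i*}·F̄_{i*}(c)) / (Σ_{i=1}^n S_i·F̄_i(c)) = 1. -/
open Real MeasureTheory Filter Topology ProbabilityTheory

open Set in
section
open Set

namespace GaussAux

lemma vne {s : ℝ} (hs : 0 < s) : (Real.toNNReal (s^2)) ≠ 0 := by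
  simp only [ne_eq, Real.toNNReal_eq_zero, not_le]; positivity

lemma vcoe {s : ℝ} (hs : 0 < s) : ((Real.toNNReal (s^2)) : ℝ) = s^2 :=
  Real.coe_toNNReal _ (by positivity)

noncomputable def tail (μ s c : ℝ) : ℝ :=
  ((gaussianReal μ (Real.toNNReal (s^2))) (Set.Ioi c)).toReal

lemma pdf_eq {μ s : ℝ} (hs : 0 < s) (x : ℝ) :
    gaussianPDFReal μ (Real.toNNReal (s^2)) x
      = (Real.sqrt (2 * π * s^2))⁻¹ * rexp (- (x - μ)^2 / (2 * s^2)) := by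
  rw [gaussianPDFReal, vcoe hs]

lemma tail_eq {μ s : ℝ} (hs : 0 < s) (c : ℝ) :
    tail μ s c = ∫ x in Ioi c, gaussianPDFReal μ (Real.toNNReal (s^2)) x := by
  rw [tail, gaussianReal_apply_eq_integral _ (vne hs), ENNReal.toReal_ofReal]
  exact integral_nonneg fun x => gaussianPDFReal_nonneg _ _ _

lemma tail_nonneg (μ s c : ℝ) : 0 ≤ tail μ s c := ENNReal.toReal_nonneg

lemma tail_lb {μ s : ℝ} (hs : 0 < s) {c ε : ℝ} (hε : 0 < ε) (hc : μ ≤ c) :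
    ε * gaussianPDFReal μ (Real.toNNReal (s^2)) (c + ε) ≤ tail μ s c := by
  rw [tail_eq hs]
  have hint : IntegrableOn (gaussianPDFReal μ (Real.toNNReal (s^2))) (Ioi c) :=
    (integrable_gaussianPDFReal _ _).restrict
  have h1 : ∫ x in Ioc c (c+ε), gaussianPDFReal μ (Real.toNNReal (s^2)) x
      ≤ ∫ x in Ioi c, gaussianPDFReal μ (Real.toNNReal (s^2)) x := by
    refine setIntegral_mono_set hint
      (ae_of_all _ fun x => gaussianPDFReal_nonneg _ _ _)
      (HasSubset.Subset.eventuallyLE Ioc_subset_Ioi_self)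
  refine le_trans ?_ h1
  have h2 : gaussianPDFReal μ (Real.toNNReal (s^2)) (c+ε) * (volume (Ioc c (c+ε))).toReal
      ≤ ∫ x in Ioc c (c+ε), gaussianPDFReal μ (Real.toNNReal (s^2)) x := by
    refine setIntegral_ge_of_const_le_real measurableSet_Ioc (by simp) ?_
      (hint.mono_set Ioc_subset_Ioi_self)
    intro x hx
    rw [pdf_eq hs, pdf_eq hs]
    have h3 : (x - μ)^2 ≤ (c + ε - μ)^2 := by nlinarith [hx.1, hx.2]
    gcongr
  rw [Real.volume_Ioc, show c + ε - c = ε by ring, ENNReal.toReal_ofReal hε.le] at h2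
  linarith

lemma tail_pos {μ s : ℝ} (hs : 0 < s) {c : ℝ} (hc : μ ≤ c) : 0 < tail μ s c :=
  lt_of_lt_of_le
    (by have := gaussianPDFReal_pos μ (Real.toNNReal (s^2)) (c+1) (vne hs); linarith)
    (tail_lb hs one_pos hc)

lemma integral_exp_neg_mul_Ioi {a c : ℝ} (ha : 0 < a) :
    ∫ x in Ioi c, rexp (-(a * x)) = a⁻¹ * rexp (-(a * c)) := by
  have := integral_comp_mul_left_Ioi (fun y => rexp (-y)) c ha
  simp only [smul_eq_mul] at this
  rw [this, integral_exp_neg_Ioi]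

lemma tail_ub {μ s : ℝ} (hs : 0 < s) {c : ℝ} (hc : μ < c) :
    tail μ s c ≤ gaussianPDFReal μ (Real.toNNReal (s^2)) c * (s^2 / (c - μ)) := by
  have hcm : 0 < c - μ := sub_pos.2 hc
  set a : ℝ := (c - μ) / s^2 with ha_def
  have ha : 0 < a := by positivity
  set K : ℝ := (Real.sqrt (2 * π * s^2))⁻¹ with hK
  have hK0 : 0 < K := by positivity
  set q : ℝ := - (c - μ)^2 / (2 * s^2) with hq
  set C : ℝ := K * rexp (q + a * c) with hC
  have hint2 : IntegrableOn (fun x => C * rexp (-(a * x))) (Ioi c) := by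
    simpa [neg_mul, IntegrableOn] using (exp_neg_integrableOn_Ioi c ha).const_mul C
  have hpt : ∀ x ∈ Ioi c, gaussianPDFReal μ (Real.toNNReal (s^2)) x ≤ C * rexp (-(a * x)) := by
    intro x hx
    rw [pdf_eq hs, hC, mul_assoc K, ← Real.exp_add, ← hK]
    gcongr _ * rexp ?_
    have hs' : s ≠ 0 := ne_of_gt hs
    have hrw : q + a * c + -(a * x)
        = (-(c-μ)^2 + 2*(c-μ)*c - 2*(c-μ)*x) / (2*s^2) := by
      rw [hq, ha_def]; field_simp; ring
    rw [hrw]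
    gcongr ?_ / _
    nlinarith [sq_nonneg (x - c)]
  have h1 : tail μ s c ≤ ∫ x in Ioi c, C * rexp (-(a * x)) := by
    rw [tail_eq hs]
    exact setIntegral_mono_on ((integrable_gaussianPDFReal _ _).restrict) hint2
      measurableSet_Ioi hpt
  rw [MeasureTheory.integral_const_mul, integral_exp_neg_mul_Ioi ha] at h1
  have ha_inv : a⁻¹ = s^2 / (c - μ) := by rw [ha_def]; rw [inv_div]
  calc tail μ s c ≤ C * (a⁻¹ * rexp (-(a * c))) := h1
    _ = gaussianPDFReal μ (Real.toNNReal (s^2)) c * (s^2 / (c - μ)) := by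
        rw [pdf_eq hs, ← hK, ← hq, ha_inv, hC,
          show K * rexp (q + a*c) * (s^2/(c-μ) * rexp (-(a*c)))
            = K * (rexp (q + a*c) * rexp (-(a*c))) * (s^2/(c-μ)) by ring,
          ← Real.exp_add, add_neg_cancel_right]

lemma quad_atBot {A B C : ℝ} (h : A < 0 ∨ (A = 0 ∧ B < 0)) :
    Tendsto (fun c => A*c^2 + B*c + C) atTop atBot := by
  rcases h with hA | ⟨hA, hB⟩
  · have hA' : A ≠ 0 := ne_of_lt hA
    have h1 : Tendsto (fun c : ℝ => (c + B/(2*A))^2) atTop atTop :=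
      (tendsto_pow_atTop two_ne_zero).comp (tendsto_atTop_add_const_right _ _ tendsto_id)
    have h2 := h1.const_mul_atTop_of_neg hA
    have h3 := tendsto_atBot_add_const_right atTop (C - B^2/(4*A)) h2
    refine h3.congr fun c => ?_
    field_simp
    ring
  · subst hA
    have h2 := tendsto_id.const_mul_atTop_of_neg hB (l := atTop)
    have h3 := tendsto_atBot_add_const_right atTop C h2
    refine h3.congr fun c => by simp only [id]; ring

lemma tendsto_tail_ratio {μ1 s1 μ2 s2 : ℝ} (hs1 : 0 < s1) (hs2 : 0 < s2)
    (h : s2 < s1 ∨ (s2 = s1 ∧ μ2 < μ1)) :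
    Tendsto (fun c => tail μ2 s2 c / tail μ1 s1 c) atTop (𝓝 0) := by
  obtain ⟨ε, hε, hQ⟩ : ∃ ε : ℝ, 0 < ε ∧
      Tendsto (fun c => (c+ε-μ1)^2/(2*s1^2) - (c-μ2)^2/(2*s2^2)) atTop atBot := by
    rcases h with hlt | ⟨hseq, hm⟩
    · refine ⟨1, one_pos, ?_⟩
      have hA : 1/(2*s1^2) - 1/(2*s2^2) < 0 := by
        have h2 : 2*s2^2 < 2*s1^2 := by nlinarith
        have := one_div_lt_one_div_of_lt (by positivity) h2
        linarith
      have := quad_atBot (A := 1/(2*s1^2) - 1/(2*s2^2))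
        (B := (1-μ1)/s1^2 + μ2/s2^2) (C := (1-μ1)^2/(2*s1^2) - μ2^2/(2*s2^2)) (Or.inl hA)
      refine this.congr fun c => ?_
      have hs1' : s1 ≠ 0 := ne_of_gt hs1
      have hs2' : s2 ≠ 0 := ne_of_gt hs2
      field_simp
      ring
    · subst hseq
      refine ⟨(μ1 - μ2)/2, by linarith, ?_⟩
      have hB : ((μ1-μ2)/2 - μ1 + μ2)/s2^2 < 0 :=
        div_neg_of_neg_of_pos (by linarith) (by positivity)
      have := quad_atBot (A := (0:ℝ)) (B := ((μ1-μ2)/2 - μ1 + μ2)/s2^2)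
        (C := (((μ1-μ2)/2-μ1)^2 - μ2^2)/(2*s2^2)) (Or.inr ⟨rfl, hB⟩)
      refine this.congr fun c => ?_
      have hs2' : s2 ≠ 0 := ne_of_gt hs2
      field_simp
      ring
  have hExp : Tendsto (fun c => rexp ((c+ε-μ1)^2/(2*s1^2) - (c-μ2)^2/(2*s2^2)))
      atTop (𝓝 0) := Real.tendsto_exp_atBot.comp hQ
  have hInv : Tendsto (fun c : ℝ => (c - μ2)⁻¹) atTop (𝓝 0) := by
    have h1 : Tendsto (fun c : ℝ => c - μ2) atTop atTop :=
      (tendsto_atTop_add_const_right _ (-μ2) tendsto_id).congr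
        fun c => (sub_eq_add_neg c μ2).symm
    exact h1.inv_tendsto_atTop
  set K1 : ℝ := (Real.sqrt (2*π*s1^2))⁻¹ with hK1
  set K2 : ℝ := (Real.sqrt (2*π*s2^2))⁻¹ with hK2
  have hK1' : K1 ≠ 0 := by rw [hK1]; positivity
  have hK2' : K2 ≠ 0 := by rw [hK2]; positivity
  have hBT : Tendsto (fun c => (gaussianPDFReal μ2 (Real.toNNReal (s2^2)) c * (s2^2/(c-μ2)))
      / (ε * gaussianPDFReal μ1 (Real.toNNReal (s1^2)) (c+ε))) atTop (𝓝 0) := by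
    have h0 : Tendsto (fun c => (K2*s2^2/(ε*K1)) * ((c-μ2)⁻¹ *
        rexp ((c+ε-μ1)^2/(2*s1^2) - (c-μ2)^2/(2*s2^2)))) atTop (𝓝 0) := by
      have := (hInv.mul hExp).const_mul (K2*s2^2/(ε*K1))
      simpa using this
    refine h0.congr' ?_
    filter_upwards [eventually_gt_atTop μ2] with c hc
    have hc0 : c - μ2 ≠ 0 := ne_of_gt (sub_pos.2 hc)
    rw [pdf_eq hs2, pdf_eq hs1, ← hK1, ← hK2, Real.exp_sub]
    have he1 := Real.exp_ne_zero ((c+ε-μ1)^2/(2*s1^2))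
    have he2 := Real.exp_ne_zero ((c-μ2)^2/(2*s2^2))
    have hε' : ε ≠ 0 := ne_of_gt hε
    rw [neg_div, neg_div, Real.exp_neg, Real.exp_neg]
    field_simp
  have hub : ∀ᶠ c in atTop, tail μ2 s2 c / tail μ1 s1 c
      ≤ (gaussianPDFReal μ2 (Real.toNNReal (s2^2)) c * (s2^2/(c-μ2)))
        / (ε * gaussianPDFReal μ1 (Real.toNNReal (s1^2)) (c+ε)) := by
    filter_upwards [eventually_gt_atTop μ2, eventually_ge_atTop μ1] with c h2 h1
    have hlb := tail_lb hs1 hε h1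
    have hlbpos : 0 < ε * gaussianPDFReal μ1 (Real.toNNReal (s1^2)) (c+ε) :=
      mul_pos hε (gaussianPDFReal_pos _ _ _ (vne hs1))
    have hub2 := tail_ub hs2 h2
    have hub2nn : 0 ≤ gaussianPDFReal μ2 (Real.toNNReal (s2^2)) c * (s2^2/(c-μ2)) :=
      mul_nonneg (gaussianPDFReal_nonneg _ _ _)
        (div_nonneg (by positivity) (sub_pos.2 h2).le)
    exact div_le_div₀ hub2nn hub2 hlbpos hlb
  exact tendsto_of_tendsto_of_tendsto_of_le_of_le' tendsto_const_nhds hBT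
    (Eventually.of_forall fun c => div_nonneg (tail_nonneg _ _ _) (tail_nonneg _ _ _)) hub

end GaussAux

end

theorem exists_unique_strongly_overrepresented_normal
    (n : ℕ) (hn : 1 ≤ n) (m σ : Fin n → ℝ) (hσ : ∀ i, 0 < σ i)
    (hdiff : ∀ i j, i ≠ j → (m i, σ i) ≠ (m j, σ j))
    (P : Fin n → Measure ℝ)
    (hP : ∀ i, P i = gaussianReal (m i) (Real.toNNReal ((σ i) ^ 2))) :
    ∃! iStar : Fin n, ∀ S : Fin n → ℝ, (∀ i, 0 < S i) →
      Tendsto (fun c => (S iStar * (P iStar (Set.Ioi c)).toReal) /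
        (∑ i, S i * (P i (Set.Ioi c)).toReal)) atTop (𝓝 1) := by
  haveI hnemp : Nonempty (Fin n) := Fin.pos_iff_nonempty.mp hn
  have hg : ∀ i c, (P i (Set.Ioi c)).toReal = GaussAux.tail (m i) (σ i) c := by
    intro i c; rw [hP i]; rfl
  set M : ℝ := Finset.univ.sup' Finset.univ_nonempty m with hM
  have hMle : ∀ i, m i ≤ M := fun i => Finset.le_sup' m (Finset.mem_univ i)
  obtain ⟨iStar, -, hmax⟩ := Finset.exists_max_image Finset.univ
    (fun i => toLex (σ i, m i)) Finset.univ_nonempty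
  have hdom : ∀ j, j ≠ iStar → σ j < σ iStar ∨ (σ j = σ iStar ∧ m j < m iStar) := by
    intro j hj
    have hle := hmax j (Finset.mem_univ j)
    have hne2 : toLex ((σ j, m j) : ℝ × ℝ) ≠ toLex ((σ iStar, m iStar) : ℝ × ℝ) := by
      intro hEq
      rw [toLex_inj, Prod.mk.injEq] at hEq
      exact hdiff j iStar hj (by rw [hEq.1, hEq.2])
    have hlt := lt_of_le_of_ne hle hne2
    rwa [Prod.Lex.lt_iff] at hlt
  have hratio : ∀ j, j ≠ iStar → Tendsto (fun c => GaussAux.tail (m j) (σ j) c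
      / GaussAux.tail (m iStar) (σ iStar) c) atTop (𝓝 0) :=
    fun j hj => GaussAux.tendsto_tail_ratio (hσ iStar) (hσ j) (hdom j hj)
  have key : ∀ S : Fin n → ℝ, (∀ i, 0 < S i) →
      Tendsto (fun c => (S iStar * (P iStar (Set.Ioi c)).toReal) /
        (∑ i, S i * (P i (Set.Ioi c)).toReal)) atTop (𝓝 1) := by
    intro S hS
    have hSi : S iStar ≠ 0 := ne_of_gt (hS iStar)
    have hR : Tendsto (fun c => ∑ j ∈ Finset.univ.erase iStar,
        (S j * GaussAux.tail (m j) (σ j) c) / (S iStar * GaussAux.tail (m iStar) (σ iStar) c))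
        atTop (𝓝 0) := by
      have hsum0 := tendsto_finset_sum (f := fun j c =>
          (S j * GaussAux.tail (m j) (σ j) c) / (S iStar * GaussAux.tail (m iStar) (σ iStar) c))
          (x := atTop) (a := fun _ => (0:ℝ)) (Finset.univ.erase iStar) (fun j hj => by
        have hj' := (hratio j (Finset.ne_of_mem_erase hj)).const_mul (S j / S iStar)
        rw [mul_zero] at hj'
        refine hj'.congr fun c => ?_
        show _ = S j * GaussAux.tail (m j) (σ j) c
          / (S iStar * GaussAux.tail (m iStar) (σ iStar) c)
        rw [mul_div_mul_comm])
      simpa using hsum0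
    have h1 : Tendsto (fun c => (1 + ∑ j ∈ Finset.univ.erase iStar,
        (S j * GaussAux.tail (m j) (σ j) c) / (S iStar * GaussAux.tail (m iStar) (σ iStar) c))⁻¹)
        atTop (𝓝 1) := by
      have := ((tendsto_const_nhds (x := (1:ℝ)) (f := atTop)).add hR).inv₀ (by norm_num)
      simpa using this
    refine h1.congr' ?_
    filter_upwards [eventually_ge_atTop M] with c hc
    have hTpos : 0 < S iStar * GaussAux.tail (m iStar) (σ iStar) c :=
      mul_pos (hS iStar) (GaussAux.tail_pos (hσ iStar) ((hMle iStar).trans hc))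
    have hTne : S iStar * GaussAux.tail (m iStar) (σ iStar) c ≠ 0 := ne_of_gt hTpos
    have hsum : ∑ i, S i * (P i (Set.Ioi c)).toReal
        = (S iStar * GaussAux.tail (m iStar) (σ iStar) c) *
          (1 + ∑ j ∈ Finset.univ.erase iStar, (S j * GaussAux.tail (m j) (σ j) c)
            / (S iStar * GaussAux.tail (m iStar) (σ iStar) c)) := by
      rw [mul_add, mul_one, Finset.mul_sum]
      rw [← Finset.add_sum_erase _ _ (Finset.mem_univ iStar)]
      simp only [hg]
      congr 1
      refine Finset.sum_congr rfl fun j hj => ?_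
      rw [mul_comm (S iStar * _), div_mul_cancel₀ _ hTne]
    rw [hsum, hg, div_mul_cancel_left₀ hTne]
  refine ⟨iStar, key, ?_⟩
  intro j hjprop
  by_contra hne'
  have h1 := hjprop (fun _ => 1) (fun _ => one_pos)
  have h2 := key (fun _ => 1) (fun _ => one_pos)
  have hadd := h1.add h2
  norm_num at hadd
  have hle : ∀ᶠ c in atTop,
      (1 * (P j (Set.Ioi c)).toReal / ∑ i, 1 * (P i (Set.Ioi c)).toReal)
      + (1 * (P iStar (Set.Ioi c)).toReal / ∑ i, 1 * (P i (Set.Ioi c)).toReal) ≤ 1 := by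
    filter_upwards [eventually_ge_atTop M] with c hc
    have hDpos : 0 < ∑ i, 1 * (P i (Set.Ioi c)).toReal := by
      refine Finset.sum_pos' (fun i _ => by
        rw [one_mul, hg]; exact GaussAux.tail_nonneg _ _ _) ⟨iStar, Finset.mem_univ _, ?_⟩
      rw [one_mul, hg]
      exact GaussAux.tail_pos (hσ iStar) ((hMle iStar).trans hc)
    rw [← add_div, div_le_one hDpos]
    have hsub : ({j, iStar} : Finset (Fin n)) ⊆ Finset.univ := Finset.subset_univ _
    have := Finset.sum_le_sum_of_subset_of_nonneg hsub (fun i _ _ => by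
      simp only [one_mul, hg]; exact GaussAux.tail_nonneg _ _ _)
      (f := fun i => 1 * (P i (Set.Ioi c)).toReal)
    rwa [Finset.sum_pair hne'] at this
  have hle' : ∀ᶠ c in atTop,
      ((P j) (Set.Ioi c)).toReal / ∑ i, ((P i) (Set.Ioi c)).toReal
      + ((P iStar) (Set.Ioi c)).toReal / ∑ i, ((P i) (Set.Ioi c)).toReal ≤ 1 := by
    simpa using hle
  have h21 : (2:ℝ) ≤ 1 := le_of_tendsto hadd hle'
  linarith
end

section
/- Let f1(x) = 1/(π(1 + x²)) and f2(x) = 1/(π(1 + 2x² − 2x)) be the Cauchy densities with medians 0 and 0.5 and scale parameters 1 and 0.5 respectively, and let F̄_i(c) = ∫_c^∞ f_i(x) dx. Then lim_{x→∞} f1(x)/f2(x) = 2 and lim_{c→∞} F̄1(c)/F̄2(c) = 2; in particular, lim_{c→∞} F̄1(c)/(F̄1(c) + F̄2(c)) = 2/3 ≠ 1, so neither distribution strongly dominates the other in the right tail. -/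
open Real MeasureTheory Filter Topology

theorem cauchy_right_tail_ratio_two
    (f1 f2 : ℝ → ℝ)
    (hf1 : ∀ x, f1 x = 1 / (π * (1 + x ^ 2)))
    (hf2 : ∀ x, f2 x = 1 / (π * (1 + 2 * x ^ 2 - 2 * x)))
    (F1 F2 : ℝ → ℝ)
    (hF1 : ∀ c, F1 c = ∫ x in Set.Ioi c, f1 x)
    (hF2 : ∀ c, F2 c = ∫ x in Set.Ioi c, f2 x) :
    Tendsto (fun x => f1 x / f2 x) atTop (𝓝 2)
    ∧ Tendsto (fun c => F1 c / F2 c) atTop (𝓝 2)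
    ∧ Tendsto (fun c => F1 c / (F1 c + F2 c)) atTop (𝓝 (2 / 3))
    ∧ ¬ Tendsto (fun c => F1 c / (F1 c + F2 c)) atTop (𝓝 1)
    ∧ ¬ Tendsto (fun c => F2 c / (F1 c + F2 c)) atTop (𝓝 1) := by
  have hπ : (0:ℝ) < π := Real.pi_pos
  have hden2 : ∀ x : ℝ, 0 < 1 + 2 * x ^ 2 - 2 * x := by
    intro x; nlinarith [sq_nonneg (2*x - 1)]
  have hden1 : ∀ x : ℝ, 0 < 1 + x ^ 2 := by
    intro x; positivity
  -- derivative facts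
  have hd1 : ∀ x : ℝ, HasDerivAt (fun y => arctan y / π) (f1 x) x := by
    intro x
    have h := (Real.hasDerivAt_arctan x).div_const π
    have heq : 1 / (1 + x ^ 2) / π = f1 x := by
      rw [hf1 x]
      have := (hden1 x).ne'
      field_simp
    rw [← heq]; exact h
  have hd2 : ∀ x : ℝ, HasDerivAt (fun y => arctan (2 * y - 1) / π) (f2 x) x := by
    intro x
    have h1 : HasDerivAt (fun y : ℝ => 2 * y - 1) 2 x := by
      simpa using ((hasDerivAt_id x).const_mul 2).sub_const 1
    have h2 := ((Real.hasDerivAt_arctan (2 * x - 1)).comp x h1).div_const π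
    have heq : 1 / (1 + (2 * x - 1) ^ 2) * 2 / π = f2 x := by
      rw [hf2 x]
      have := (hden2 x).ne'
      have h3 : 1 + (2 * x - 1) ^ 2 = 2 * (1 + 2 * x ^ 2 - 2 * x) := by ring
      rw [h3]
      field_simp
    rw [← heq]; exact h2
  -- Part 1: pointwise density ratio tends to 2
  have part1 : Tendsto (fun x => f1 x / f2 x) atTop (𝓝 2) := by
    have key : Tendsto (fun u : ℝ => (u ^ 2 + 2 - 2 * u) / (u ^ 2 + 1)) (𝓝 0) (𝓝 2) := by
      have : ContinuousAt (fun u : ℝ => (u ^ 2 + 2 - 2 * u) / (u ^ 2 + 1)) 0 := by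
        apply ContinuousAt.div
        · fun_prop
        · fun_prop
        · norm_num
      have h0 : ((0:ℝ) ^ 2 + 2 - 2 * 0) / ((0:ℝ) ^ 2 + 1) = 2 := by norm_num
      simpa [ContinuousAt, h0] using this
    have comp := key.comp tendsto_inv_atTop_zero
    apply comp.congr'
    filter_upwards [eventually_gt_atTop (0:ℝ)] with x hx
    have hx' : x ≠ 0 := ne_of_gt hx
    simp only [Function.comp_apply]
    rw [hf1 x, hf2 x]
    have h1 := (hden1 x).ne'
    have h2 := (hden2 x).ne'
    field_simp
  -- closed forms for the tails
  have hF1' : ∀ c, F1 c = 1 / 2 - arctan c / π := by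
    intro c
    rw [hF1 c]
    have hpos : ∀ x ∈ Set.Ioi c, 0 ≤ f1 x := by
      intro x _
      rw [hf1 x]; positivity
    have hlim : Tendsto (fun y => arctan y / π) atTop (𝓝 ((π / 2) / π)) :=
      (tendsto_nhds_of_tendsto_nhdsWithin Real.tendsto_arctan_atTop).div_const π
    rw [integral_Ioi_of_hasDerivAt_of_nonneg' (fun x _ => hd1 x) hpos hlim]
    field_simp
  have hF2' : ∀ c, F2 c = 1 / 2 - arctan (2 * c - 1) / π := by
    intro c
    rw [hF2 c]
    have hpos : ∀ x ∈ Set.Ioi c, 0 ≤ f2 x := by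
      intro x _
      rw [hf2 x]
      have := hden2 x
      positivity
    have hlim : Tendsto (fun y => arctan (2 * y - 1) / π) atTop (𝓝 ((π / 2) / π)) := by
      apply Tendsto.div_const
      apply (tendsto_nhds_of_tendsto_nhdsWithin Real.tendsto_arctan_atTop).comp
      apply tendsto_atTop_add_const_right
      exact (tendsto_const_mul_atTop_of_pos (by norm_num)).mpr tendsto_id
    rw [integral_Ioi_of_hasDerivAt_of_nonneg' (fun x _ => hd2 x) hpos hlim]
    field_simp
  -- positivity of tails
  have hF1pos : ∀ c, 0 < F1 c := by
    intro c
    rw [hF1' c]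
    have := Real.arctan_lt_pi_div_two c
    rw [sub_pos, div_lt_iff₀ hπ]
    linarith
  have hF2pos : ∀ c, 0 < F2 c := by
    intro c
    rw [hF2' c]
    have := Real.arctan_lt_pi_div_two (2 * c - 1)
    rw [sub_pos, div_lt_iff₀ hπ]
    linarith
  -- Part 2: L'Hôpital
  have h0 : (1:ℝ)/2 - (π/2)/π = 0 := by field_simp; ring
  have part2 : Tendsto (fun c => F1 c / F2 c) atTop (𝓝 2) := by
    apply HasDerivAt.lhopital_zero_atTop (f' := fun c => -f1 c) (g' := fun c => -f2 c)
    · filter_upwards with x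
      exact ((hd1 x).const_sub (1/2 : ℝ)).congr_of_eventuallyEq
        (by filter_upwards with y; rw [hF1' y])
    · filter_upwards with x
      exact ((hd2 x).const_sub (1/2 : ℝ)).congr_of_eventuallyEq
        (by filter_upwards with y; rw [hF2' y])
    · filter_upwards with x
      rw [hf2 x]
      have h := hden2 x
      have : 0 < 1 / (π * (1 + 2 * x ^ 2 - 2 * x)) := by positivity
      simp only [neg_ne_zero]
      exact this.ne'
    · have : Tendsto (fun c => 1 / 2 - arctan c / π) atTop (𝓝 (1/2 - (π/2)/π)) :=
        tendsto_const_nhds.sub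
          ((tendsto_nhds_of_tendsto_nhdsWithin Real.tendsto_arctan_atTop).div_const π)
      rw [h0] at this
      exact this.congr (fun c => (hF1' c).symm)
    · have harg : Tendsto (fun c : ℝ => 2 * c - 1) atTop atTop := by
        apply tendsto_atTop_add_const_right
        exact (tendsto_const_mul_atTop_of_pos (by norm_num)).mpr tendsto_id
      have : Tendsto (fun c => 1 / 2 - arctan (2 * c - 1) / π) atTop (𝓝 (1/2 - (π/2)/π)) :=
        tendsto_const_nhds.sub
          (((tendsto_nhds_of_tendsto_nhdsWithin Real.tendsto_arctan_atTop).comp harg).div_const π)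
      rw [h0] at this
      exact this.congr (fun c => (hF2' c).symm)
    · exact part1.congr (fun x => by rw [neg_div_neg_eq])
  -- Part 3
  have part3 : Tendsto (fun c => F1 c / (F1 c + F2 c)) atTop (𝓝 (2 / 3)) := by
    have h : Tendsto (fun c => (F1 c / F2 c) / (1 + F1 c / F2 c)) atTop (𝓝 (2 / (1 + 2))) :=
      part2.div (tendsto_const_nhds.add part2) (by norm_num)
    norm_num at h
    apply h.congr
    intro c
    have h1 := (hF1pos c).ne'
    have h2 := (hF2pos c).ne'
    have hsum := (add_pos (hF1pos c) (hF2pos c)).ne'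
    have h4 : (0:ℝ) < 1 + F1 c / F2 c := by
      have := div_pos (hF1pos c) (hF2pos c); linarith
    rw [div_eq_div_iff h4.ne' hsum, div_mul_eq_mul_div, mul_one_add,
      div_eq_iff h2]
    field_simp
    ring
  refine ⟨part1, part2, part3, ?_, ?_⟩
  · intro hcon
    have := tendsto_nhds_unique part3 hcon
    norm_num at this
  · intro hcon
    have h4 : Tendsto (fun c => F2 c / (F1 c + F2 c)) atTop (𝓝 (1/3)) := by
      have h := (tendsto_const_nhds : Tendsto (fun _ : ℝ => (1:ℝ)) atTop (𝓝 1)).sub part3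
      norm_num at h
      apply h.congr
      intro c
      have hsum := (add_pos (hF1pos c) (hF2pos c)).ne'
      field_simp
      ring
    have := tendsto_nhds_unique h4 hcon
    norm_num at this
end
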